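/- Let (μ_k) and (ν_k) be the laws of two Markov chains driven by the same kernel π_h, and suppose W_ρ(μπ_h, νπ_h) ≤ (1−ch) W_ρ(μ, ν) for all probability measures μ, ν with 0 < ch < 1, and suppose μ_{h,∞} is invariant and μ_∞ arbitrary. Then W_ρ(μ_∞, μ_{h,∞}) ≤ (1 − (1−ch)^l)^{-1} W_ρ(μ_∞ π^l, μ_∞ π_h^l) for any l ∈ ℕ with l ≥ 1, where π is any kernel leaving μ_∞ invariant. -/
import Mathlib


/-- From one-step Wasserstein contraction of the discretization kernel and
invariance of `μ_∞` under the continuous semigroup, the invariant-measure bias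
is bounded by the finite-time strong error. -/
theorem stmt15 {M : Type*} (W : M → M → ℝ)
    (hW0 : ∀ a b, 0 ≤ W a b)
    (htri : ∀ a b c, W a c ≤ W a b + W b c)
    (πh π : M → M) (c h : ℝ) (hch0 : 0 < c * h) (hch1 : c * h < 1)
    (hcontr : ∀ a b, W (πh a) (πh b) ≤ (1 - c * h) * W a b)
    (μinf μhinf : M) (hinv_h : πh μhinf = μhinf) (hinv : π μinf = μinf)
    (l : ℕ) (hl : 1 ≤ l) :
    W μinf μhinf ≤ (1 - (1 - c * h) ^ l)⁻¹ * W (π^[l] μinf) (πh^[l] μinf) := by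
  have hq0 : (0:ℝ) ≤ 1 - c * h := by linarith
  have hql : (1 - c * h) ^ l < 1 := pow_lt_one₀ hq0 (by linarith) (by omega)
  have hqnn : (0:ℝ) ≤ (1 - c * h) ^ l := pow_nonneg hq0 l
  have hpos : (0:ℝ) < 1 - (1 - c * h) ^ l := by linarith
  have hiter : ∀ n a b, W (πh^[n] a) (πh^[n] b) ≤ (1 - c * h) ^ n * W a b := by
    intro n
    induction n with
    | zero => intro a b; simp
    | succ n ih =>
      intro a b
      rw [Function.iterate_succ_apply', Function.iterate_succ_apply']
      calc W (πh (πh^[n] a)) (πh (πh^[n] b))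
          ≤ (1 - c * h) * W (πh^[n] a) (πh^[n] b) := hcontr _ _
        _ ≤ (1 - c * h) * ((1 - c * h) ^ n * W a b) :=
            mul_le_mul_of_nonneg_left (ih a b) hq0
        _ = (1 - c * h) ^ (n + 1) * W a b := by ring
  have hfixh : πh^[l] μhinf = μhinf := Function.iterate_fixed hinv_h l
  have hfixp : π^[l] μinf = μinf := Function.iterate_fixed hinv l
  have htr : W μinf μhinf ≤ W μinf (πh^[l] μinf) + W (πh^[l] μinf) μhinf := htri _ _ _
  have h2 : W (πh^[l] μinf) μhinf ≤ (1 - c * h) ^ l * W μinf μhinf := by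
    have := hiter l μinf μhinf
    rwa [hfixh] at this
  rw [hfixp, inv_mul_eq_div, le_div_iff₀ hpos]
  nlinarith [htr, h2]
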